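/- For every real number x with 0 < |x| < 1/2, the series ∑_{ℓ=0}^∞ (1/(2ℓ+1)) C(2ℓ,ℓ) x^{2ℓ} converges to (1/(2x)) · arctan(2x/√(1-4x²)). -/

import Mathlib

open Real Set

private lemma cb_le_real (ℓ : ℕ) : (Nat.centralBinom ℓ : ℝ) ≤ 4 ^ ℓ := by
  have h1 : Nat.centralBinom ℓ ≤ 4 ^ ℓ := by
    rw [Nat.centralBinom_eq_two_mul_choose]
    calc (2*ℓ).choose ℓ ≤ (2*ℓ+1).choose ℓ := Nat.choose_le_choose ℓ (Nat.le_succ _)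
      _ ≤ 4 ^ ℓ := Nat.choose_middle_le_pow ℓ
  exact_mod_cast h1

private lemma term_bound {r : ℝ} {t : ℝ} (ht : t ∈ Ioo (-r) r) (ℓ : ℕ) :
    ‖(Nat.centralBinom ℓ : ℝ) * t ^ (2*ℓ)‖ ≤ (4 * r^2) ^ ℓ := by
  obtain ⟨h1, h2⟩ := ht
  have habs : |t| ≤ r := by rw [abs_le]; constructor <;> linarith
  have hc0 : (0:ℝ) ≤ (Nat.centralBinom ℓ : ℝ) := Nat.cast_nonneg _
  rw [norm_mul, norm_pow, Real.norm_eq_abs, Real.norm_eq_abs, abs_of_nonneg hc0]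
  calc (Nat.centralBinom ℓ:ℝ) * |t|^(2*ℓ) ≤ 4^ℓ * r^(2*ℓ) := by
        apply mul_le_mul (cb_le_real ℓ) (pow_le_pow_left₀ (abs_nonneg t) habs _)
          (by positivity) (by positivity)
    _ = (4*r^2)^ℓ := by rw [mul_pow, pow_mul]

/-- Generating function of central binomial coefficients. -/
private lemma hasSum_centralBinom {r : ℝ} (hr0 : 0 < r) (hr : r < 1/2) {t : ℝ}
    (ht : t ∈ Ioo (-r) r) :
    HasSum (fun ℓ : ℕ => (Nat.centralBinom ℓ : ℝ) * t ^ (2*ℓ))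
      (1 / Real.sqrt (1 - 4 * t^2)) := by
  set s : Set ℝ := Ioo (-r) r with hs
  have hs_open : IsOpen s := isOpen_Ioo
  have hs_conn : IsPreconnected s := (convex_Ioo _ _).isPreconnected
  have h0s : (0:ℝ) ∈ s := ⟨by linarith, hr0⟩
  have hq : 4*r^2 < 1 := by nlinarith
  have hq0 : (0:ℝ) ≤ 4*r^2 := by positivity
  have hu : Summable (fun ℓ : ℕ => (2/r) * ((ℓ:ℝ) * (4*r^2)^ℓ)) := by
    have h := summable_pow_mul_geometric_of_norm_lt_one (R := ℝ) 1 (r := (4*r^2))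
      (by rw [Real.norm_eq_abs, abs_of_nonneg hq0]; exact hq)
    simpa [pow_one] using h.mul_left (2/r)
  have hder : ∀ (ℓ : ℕ) (y : ℝ), HasDerivAt (fun z : ℝ => (Nat.centralBinom ℓ : ℝ) * z ^ (2*ℓ))
      ((Nat.centralBinom ℓ : ℝ) * (((2*ℓ : ℕ):ℝ) * y ^ (2*ℓ - 1))) y := fun ℓ y =>
    (hasDerivAt_pow (2*ℓ) y).const_mul ((Nat.centralBinom ℓ : ℝ))
  have hder_bound : ∀ (ℓ : ℕ) (y : ℝ), y ∈ s →
      ‖(Nat.centralBinom ℓ : ℝ) * (((2*ℓ : ℕ):ℝ) * y ^ (2*ℓ - 1))‖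
        ≤ (2/r) * ((ℓ:ℝ) * (4*r^2)^ℓ) := by
    intro ℓ y hy
    obtain ⟨h1, h2⟩ := hy
    have habs : |y| ≤ r := by rw [abs_le]; constructor <;> linarith
    cases ℓ with
    | zero => simp
    | succ k =>
      have he : 2*(k+1) - 1 = 2*k+1 := by omega
      rw [he]
      have hb : ‖(Nat.centralBinom (k+1) : ℝ) * (((2*(k+1) : ℕ):ℝ) * y ^ (2*k+1))‖
          ≤ 4^(k+1) * ((2*(k+1) : ℕ):ℝ) * r^(2*k+1) := by
        rw [norm_mul, norm_mul, norm_pow, Real.norm_eq_abs, Real.norm_eq_abs,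
          Real.norm_eq_abs, abs_of_nonneg (Nat.cast_nonneg _), abs_of_nonneg (Nat.cast_nonneg _)]
        have h3 : |y|^(2*k+1) ≤ r^(2*k+1) := pow_le_pow_left₀ (abs_nonneg y) habs _
        have h4 := cb_le_real (k+1)
        calc (Nat.centralBinom (k+1):ℝ) * (((2*(k+1):ℕ):ℝ) * |y|^(2*k+1))
            ≤ 4^(k+1) * (((2*(k+1):ℕ):ℝ) * r^(2*k+1)) := by
              apply mul_le_mul h4 _ (by positivity) (by positivity)
              exact mul_le_mul_of_nonneg_left h3 (Nat.cast_nonneg _)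
          _ = 4^(k+1) * ((2*(k+1):ℕ):ℝ) * r^(2*k+1) := by ring
      refine hb.trans (le_of_eq ?_)
      have hrne : r ≠ 0 := hr0.ne'
      push_cast
      field_simp
      ring
  have h00 : HasSum (fun ℓ : ℕ => (Nat.centralBinom ℓ : ℝ) * (0:ℝ) ^ (2*ℓ)) 1 := by
    have hfe : (fun ℓ : ℕ => (Nat.centralBinom ℓ : ℝ) * (0:ℝ) ^ (2*ℓ))
        = fun ℓ => if ℓ = 0 then (1:ℝ) else 0 := by
      funext ℓ
      cases ℓ with
      | zero => simp [Nat.centralBinom_zero]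
      | succ k =>
        have h2 : 2*(k+1) ≠ 0 := by omega
        simp [zero_pow h2]
    rw [hfe]
    exact hasSum_ite_eq 0 1
  set F : ℝ → ℝ := fun z => ∑' ℓ : ℕ, (Nat.centralBinom ℓ : ℝ) * z ^ (2*ℓ) with hF
  have hFsum : ∀ y ∈ s, HasSum (fun ℓ : ℕ => (Nat.centralBinom ℓ:ℝ) * y^(2*ℓ)) (F y) := by
    intro y hy
    exact (summable_of_summable_hasDerivAt_of_isPreconnected hu hs_open hs_conn
      (fun n z _ => hder n z) hder_bound h0s h00.summable hy).hasSum
  have hFderiv : ∀ y ∈ s, HasDerivAt F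
      (∑' ℓ : ℕ, (Nat.centralBinom ℓ:ℝ) * (((2*ℓ:ℕ):ℝ) * y^(2*ℓ-1))) y := by
    intro y hy
    exact hasDerivAt_tsum_of_isPreconnected hu hs_open hs_conn
      (fun n z _ => hder n z) hder_bound h0s h00.summable hy
  have hDsum : ∀ y ∈ s, Summable (fun ℓ : ℕ => (Nat.centralBinom ℓ:ℝ) * (((2*ℓ:ℕ):ℝ) * y^(2*ℓ-1))) := by
    intro y hy
    exact Summable.of_norm_bounded hu (fun ℓ => hder_bound ℓ y hy)
  -- the ODE (1-4y²) F' = 4 y F via telescoping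
  have hODE : ∀ y ∈ s,
      (1 - 4*y^2) * (∑' ℓ : ℕ, (Nat.centralBinom ℓ:ℝ) * (((2*ℓ:ℕ):ℝ) * y^(2*ℓ-1)))
        = 4*y*F y := by
    intro y hy
    set D := ∑' ℓ : ℕ, (Nat.centralBinom ℓ:ℝ) * (((2*ℓ:ℕ):ℝ) * y^(2*ℓ-1)) with hD
    have hDS : HasSum (fun ℓ : ℕ => (Nat.centralBinom ℓ:ℝ) * (((2*ℓ:ℕ):ℝ) * y^(2*ℓ-1))) D :=
      (hDsum y hy).hasSum
    have h1 := (hDS.mul_left (1 - 4*y^2)).sub ((hFsum y hy).mul_left (4*y))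
    set a : ℕ → ℝ := fun ℓ =>
      (1 - 4*y^2) * ((Nat.centralBinom ℓ:ℝ) * (((2*ℓ:ℕ):ℝ) * y^(2*ℓ-1)))
        - 4*y * ((Nat.centralBinom ℓ:ℝ) * y^(2*ℓ)) with ha
    set b : ℕ → ℝ := fun ℓ => -((Nat.centralBinom ℓ:ℝ) * (((2*ℓ:ℕ):ℝ) * y^(2*ℓ-1))) with hb
    have hab : ∀ ℓ, a ℓ = b (ℓ+1) - b ℓ := by
      intro ℓ
      cases ℓ with
      | zero =>
        simp only [ha, hb]
        norm_num [Nat.centralBinom_zero, Nat.centralBinom]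
        ring
      | succ k =>
        simp only [ha, hb]
        have e1 : 2*(k+1) - 1 = 2*k+1 := by omega
        have e2 : 2*(k+2) - 1 = 2*k+3 := by omega
        rw [e1, e2]
        have hrec := Nat.succ_mul_centralBinom_succ (k+1)
        have hrc : ((k:ℝ)+2) * (Nat.centralBinom (k+2) : ℝ)
            = 2*(2*(k:ℝ)+3) * (Nat.centralBinom (k+1) : ℝ) := by
          exact_mod_cast hrec
        push_cast
        linear_combination (2*y^(2*k+3)) * hrc
    have hb0 : b 0 = 0 := by simp [hb]
    have hpartial : ∀ n, ∑ ℓ ∈ Finset.range n, a ℓ = b n := by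
      intro n
      calc ∑ ℓ ∈ Finset.range n, a ℓ = ∑ ℓ ∈ Finset.range n, (b (ℓ+1) - b ℓ) := by
            exact Finset.sum_congr rfl fun ℓ _ => hab ℓ
        _ = b n - b 0 := Finset.sum_range_sub b n
        _ = b n := by rw [hb0, sub_zero]
    have hbtend : Filter.Tendsto b Filter.atTop (nhds 0) := by
      have := (hDsum y hy).tendsto_atTop_zero
      simpa [hb] using this.neg
    have h2 := h1.tendsto_sum_nat
    have h3 : Filter.Tendsto (fun n => ∑ ℓ ∈ Finset.range n, a ℓ) Filter.atTop (nhds 0) := by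
      simpa [hpartial] using hbtend
    have h4 : (1 - 4*y^2) * D - 4*y * F y = 0 := tendsto_nhds_unique h2 h3
    linarith
  have hpos : ∀ y ∈ s, 0 < 1 - 4*y^2 := by
    intro y hy
    obtain ⟨h1, h2⟩ := hy
    nlinarith
  -- ψ = F · √(1-4y²) has zero derivative
  have hψ : ∀ y ∈ s, HasDerivAt (fun z => F z * Real.sqrt (1 - 4*z^2)) 0 y := by
    intro y hy
    have hv := hpos y hy
    have h1 : HasDerivAt (fun z : ℝ => 1 - 4*z^2) (-(8*y)) y := by
      have h := ((hasDerivAt_pow 2 y).const_mul (4:ℝ)).const_sub 1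
      refine h.congr_deriv ?_
      push_cast
      ring
    have hsqrt := h1.sqrt hv.ne'
    have hmul := (hFderiv y hy).mul hsqrt
    have hsqp : 0 < Real.sqrt (1 - 4*y^2) := Real.sqrt_pos.mpr hv
    have hvv : Real.sqrt (1 - 4*y^2) * Real.sqrt (1 - 4*y^2) = 1 - 4*y^2 :=
      Real.mul_self_sqrt hv.le
    have key := hODE y hy
    refine hmul.congr_deriv ?_
    set D := ∑' ℓ : ℕ, (Nat.centralBinom ℓ:ℝ) * (((2*ℓ:ℕ):ℝ) * y^(2*ℓ-1))
    rw [eq_comm]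
    field_simp
    linear_combination (-2)*D*hvv - 2*key
  -- hence ψ is constant equal to 1
  have hconst : ∀ y ∈ s, F y * Real.sqrt (1 - 4*y^2) = 1 := by
    intro y hy
    have hle := Convex.norm_image_sub_le_of_norm_hasDerivWithin_le
      (f := fun z => F z * Real.sqrt (1 - 4*z^2)) (f' := fun _ => (0:ℝ)) (C := 0)
      (fun z hz => (hψ z hz).hasDerivWithinAt) (fun z _ => by simp) (convex_Ioo _ _) h0s hy
    have hψ0 : F 0 * Real.sqrt (1 - 4*(0:ℝ)^2) = 1 := by
      have hF0 : F 0 = 1 := h00.tsum_eq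
      rw [hF0]
      norm_num
    have : F y * Real.sqrt (1 - 4*y^2) = F 0 * Real.sqrt (1 - 4*(0:ℝ)^2) := by
      have := hle
      simp only [zero_mul, norm_le_zero_iff, sub_eq_zero] at this
      exact this
    rw [this, hψ0]
  have hsqp : 0 < Real.sqrt (1 - 4*t^2) := Real.sqrt_pos.mpr (hpos t ht)
  have hFt : F t = 1 / Real.sqrt (1 - 4*t^2) := by
    rw [eq_div_iff hsqp.ne']
    exact hconst t ht
  exact hFt ▸ hFsum t ht

/-- The integrated series equals `arcsin(2t)/2`. -/
private lemma hasSum_arcsin_aux {r : ℝ} (hr0 : 0 < r) (hr : r < 1/2) {t : ℝ}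
    (ht : t ∈ Ioo (-r) r) :
    HasSum (fun ℓ : ℕ => (Nat.centralBinom ℓ : ℝ) / (2*(ℓ:ℝ)+1) * t ^ (2*ℓ+1))
      (Real.arcsin (2*t) / 2) := by
  set s : Set ℝ := Ioo (-r) r with hs
  have hs_open : IsOpen s := isOpen_Ioo
  have hs_conn : IsPreconnected s := (convex_Ioo _ _).isPreconnected
  have h0s : (0:ℝ) ∈ s := ⟨by linarith, hr0⟩
  have hq : 4*r^2 < 1 := by nlinarith
  have hq0 : (0:ℝ) ≤ 4*r^2 := by positivity
  have hu : Summable (fun ℓ : ℕ => (4*r^2)^ℓ) := summable_geometric_of_lt_one hq0 hq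
  have hder : ∀ (ℓ : ℕ) (y : ℝ),
      HasDerivAt (fun z : ℝ => (Nat.centralBinom ℓ : ℝ) / (2*(ℓ:ℝ)+1) * z ^ (2*ℓ+1))
        ((Nat.centralBinom ℓ : ℝ) * y ^ (2*ℓ)) y := by
    intro ℓ y
    have h := (hasDerivAt_pow (2*ℓ+1) y).const_mul ((Nat.centralBinom ℓ : ℝ) / (2*(ℓ:ℝ)+1))
    refine h.congr_deriv ?_
    have hne : (2*(ℓ:ℝ)+1) ≠ 0 := by positivity
    have e1 : 2*ℓ+1-1 = 2*ℓ := by omega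
    rw [e1]
    push_cast
    field_simp
  have hder_bound : ∀ (ℓ : ℕ) (y : ℝ), y ∈ s →
      ‖(Nat.centralBinom ℓ : ℝ) * y ^ (2*ℓ)‖ ≤ (4*r^2)^ℓ := fun ℓ y hy => term_bound hy ℓ
  have h00 : Summable (fun ℓ : ℕ => (Nat.centralBinom ℓ : ℝ) / (2*(ℓ:ℝ)+1) * (0:ℝ) ^ (2*ℓ+1)) := by
    have hfe : (fun ℓ : ℕ => (Nat.centralBinom ℓ : ℝ) / (2*(ℓ:ℝ)+1) * (0:ℝ) ^ (2*ℓ+1))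
        = fun _ => (0:ℝ) := by
      funext ℓ
      simp [zero_pow (Nat.succ_ne_zero (2*ℓ))]
    rw [hfe]
    exact summable_zero
  set H : ℝ → ℝ := fun z => ∑' ℓ : ℕ, (Nat.centralBinom ℓ : ℝ) / (2*(ℓ:ℝ)+1) * z ^ (2*ℓ+1)
    with hH
  have hHsum : ∀ y ∈ s,
      HasSum (fun ℓ : ℕ => (Nat.centralBinom ℓ : ℝ) / (2*(ℓ:ℝ)+1) * y ^ (2*ℓ+1)) (H y) := by
    intro y hy
    exact (summable_of_summable_hasDerivAt_of_isPreconnected hu hs_open hs_conn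
      (fun n z _ => hder n z) hder_bound h0s h00 hy).hasSum
  have hHderiv : ∀ y ∈ s, HasDerivAt H (1 / Real.sqrt (1 - 4*y^2)) y := by
    intro y hy
    have h := hasDerivAt_tsum_of_isPreconnected hu hs_open hs_conn
      (fun n z _ => hder n z) hder_bound h0s h00 hy
    have he : (∑' ℓ : ℕ, (Nat.centralBinom ℓ : ℝ) * y ^ (2*ℓ)) = 1 / Real.sqrt (1 - 4*y^2) :=
      (hasSum_centralBinom hr0 hr hy).tsum_eq
    rwa [he] at h
  have hpos : ∀ y ∈ s, 0 < 1 - 4*y^2 := by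
    intro y hy
    obtain ⟨h1, h2⟩ := hy
    nlinarith
  have hK : ∀ y ∈ s, HasDerivAt (fun z => H z - Real.arcsin (2*z) / 2) 0 y := by
    intro y hy
    obtain ⟨h1, h2⟩ := hy
    have hne1' : (2:ℝ)*y ≠ -1 := by intro h; nlinarith
    have hne2 : (2:ℝ)*y ≠ 1 := by intro h; nlinarith
    have h2y : HasDerivAt (fun z : ℝ => 2*z) 2 y := by
      simpa using (hasDerivAt_id y).const_mul (2:ℝ)
    have harc0 := (Real.hasDerivAt_arcsin hne1' hne2).comp y h2y
    have harc : HasDerivAt (fun z : ℝ => Real.arcsin (2*z))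
        (1 / Real.sqrt (1 - (2*y)^2) * 2) y := by
      exact harc0
    have hsub := (hHderiv y ⟨h1, h2⟩).sub (harc.div_const 2)
    refine hsub.congr_deriv ?_
    have he : (2*y)^2 = 4*y^2 := by ring
    rw [he]
    ring
  have hconst : ∀ y ∈ s, H y - Real.arcsin (2*y) / 2 = 0 := by
    intro y hy
    have hle := Convex.norm_image_sub_le_of_norm_hasDerivWithin_le
      (f := fun z => H z - Real.arcsin (2*z) / 2) (f' := fun _ => (0:ℝ)) (C := 0)
      (fun z hz => (hK z hz).hasDerivWithinAt) (fun z _ => by simp) (convex_Ioo _ _) h0s hy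
    have hH0 : H 0 = 0 := by
      rw [hH]
      have hfe : (fun ℓ : ℕ => (Nat.centralBinom ℓ : ℝ) / (2*(ℓ:ℝ)+1) * (0:ℝ) ^ (2*ℓ+1))
          = fun _ => (0:ℝ) := by
        funext ℓ
        simp [zero_pow (Nat.succ_ne_zero (2*ℓ))]
      simp only [hfe]
      exact tsum_zero
    have h0v : H 0 - Real.arcsin (2*(0:ℝ)) / 2 = 0 := by
      rw [hH0]; norm_num
    simp only [zero_mul, norm_le_zero_iff, sub_eq_zero] at hle
    rw [hle, h0v]
  have hHt : H t = Real.arcsin (2*t) / 2 := by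
    have := hconst t ht
    linarith
  exact hHt ▸ hHsum t ht

/-- For every real `x` with `0 < |x| < 1/2`, the series
`∑ (1/(2ℓ+1)) C(2ℓ,ℓ) x^(2ℓ)` converges to `(1/(2x)) · arctan(2x/√(1-4x²))`. -/
theorem central_binomial_arctan_series (x : ℝ) (hx0 : 0 < |x|) (hx : |x| < 1/2) :
    HasSum (fun ℓ : ℕ => (1 / (2 * (ℓ : ℝ) + 1)) * ((2 * ℓ).choose ℓ : ℝ) * x ^ (2 * ℓ))
      ((1 / (2 * x)) * Real.arctan (2 * x / Real.sqrt (1 - 4 * x ^ 2))) := by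
  have hxne : x ≠ 0 := by
    intro h; rw [h] at hx0; simp at hx0
  set r : ℝ := 1/4 + |x|/2 with hr_def
  have hr0 : 0 < r := by positivity
  have hrx : |x| < r := by rw [hr_def]; linarith
  have hr : r < 1/2 := by rw [hr_def]; linarith
  have ht : x ∈ Ioo (-r) r := by
    obtain ⟨h1, h2⟩ := abs_lt.mp hrx
    exact ⟨h1, h2⟩
  have h := hasSum_arcsin_aux hr0 hr ht
  have h2 := h.mul_left x⁻¹
  have hfun : (fun ℓ : ℕ => (1 / (2 * (ℓ : ℝ) + 1)) * ((2 * ℓ).choose ℓ : ℝ) * x ^ (2 * ℓ))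
      = fun ℓ : ℕ => x⁻¹ * ((Nat.centralBinom ℓ : ℝ) / (2*(ℓ:ℝ)+1) * x ^ (2*ℓ+1)) := by
    funext ℓ
    rw [Nat.centralBinom_eq_two_mul_choose, pow_succ]
    have hne : (2*(ℓ:ℝ)+1) ≠ 0 := by positivity
    field_simp
  have h2x : (2:ℝ)*x ∈ Ioo (-(1:ℝ)) 1 := by
    obtain ⟨h1', h2'⟩ := abs_lt.mp hx
    constructor <;> nlinarith
  have hval : (1 / (2 * x)) * Real.arctan (2 * x / Real.sqrt (1 - 4 * x ^ 2))
      = x⁻¹ * (Real.arcsin (2*x) / 2) := by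
    rw [Real.arcsin_eq_arctan h2x]
    have he : (2*x)^2 = 4*x^2 := by ring
    rw [he]
    field_simp
  rw [hfun, hval]
  exact h2
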